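/- arXiv:2010.11064 — 5 statements merged into one kernel-verified Lean document; each statement's English description precedes it below -/
import Mathlib

section
/- Let P_{i-1} be the set of Pareto-optimal solutions among S_{i-1} = {x ∈ {0,1}^n : x_j = 0 for all j ≥ i} and P_i the set of Pareto-optimal solutions among S_i = {x ∈ {0,1}^n : x_j = 0 for all j ≥ i+1}. Then P_i ⊆ P_{i-1} ∪ P_{i-1}^{+i}, where P_{i-1}^{+i} is obtained from P_{i-1} by setting coordinate i to 1 in each solution. -/
def dotB {n : ℕ} (c : Fin n → ℝ) (x : Fin n → Bool) : ℝ :=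
  ∑ i, c i * (if x i then 1 else 0)

def dominates {n : ℕ} (p w : Fin n → ℝ) (y x : Fin n → Bool) : Prop :=
  dotB p x ≤ dotB p y ∧ dotB w y ≤ dotB w x ∧ (dotB p x < dotB p y ∨ dotB w y < dotB w x)

/-- The set of Pareto-optimal solutions within a set `S` of solutions. -/
def paretoSet {n : ℕ} (p w : Fin n → ℝ) (S : Set (Fin n → Bool)) : Set (Fin n → Bool) :=
  {x | x ∈ S ∧ ∀ y ∈ S, ¬ dominates p w y x}

lemma dotB_update_true {n : ℕ} (c : Fin n → ℝ) (x : Fin n → Bool) (i : Fin n)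
    (h : x i = false) : dotB c (Function.update x i true) = dotB c x + c i := by
  unfold dotB
  rw [← Finset.sum_erase_add _ _ (Finset.mem_univ i),
      ← Finset.sum_erase_add _ _ (Finset.mem_univ i)]
  have hs : ∀ j ∈ Finset.univ.erase i,
      c j * (if Function.update x i true j then 1 else 0) = c j * (if x j then 1 else 0) := by
    intro j hj
    rw [Function.update_of_ne (Finset.ne_of_mem_erase hj)]
  rw [Finset.sum_congr rfl hs]
  simp [h]

/-- `P_i ⊆ P_{i-1} ∪ P_{i-1}^{+i}` where `S_{i-1}` consists of the solutions using only
items `< i` and `S_i` of those using only items `≤ i`. -/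
theorem pareto_step {n : ℕ} (p w : Fin n → ℝ) (hp : ∀ i, 0 ≤ p i) (hw : ∀ i, 0 ≤ w i)
    (i : Fin n) :
    paretoSet p w {x | ∀ j, i < j → x j = false} ⊆
      paretoSet p w {x | ∀ j, i ≤ j → x j = false} ∪
        (fun x => Function.update x i true) '' paretoSet p w {x | ∀ j, i ≤ j → x j = false} := by
  intro x hx
  obtain ⟨hxS, hxP⟩ := hx
  by_cases hxi : x i = true
  · -- right component, via x' = update x i false
    right
    set x' := Function.update x i false with hx'
    have hx'i : x' i = false := by simp [hx']
    have hupd : Function.update x' i true = x := by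
      funext j
      by_cases hj : j = i
      · subst hj; simp [hxi]
      · simp [hx', Function.update_of_ne hj]
    have hx'S : x' ∈ {y : Fin n → Bool | ∀ j, i ≤ j → y j = false} := by
      intro j hj
      rcases eq_or_lt_of_le hj with h | h
      · rw [← h]; exact hx'i
      · rw [hx', Function.update_of_ne (ne_of_gt h)]; exact hxS j h
    refine ⟨x', ⟨hx'S, ?_⟩, hupd⟩
    intro y hyS hdom
    -- transfer domination to S_i
    have hyi : y i = false := hyS i le_rfl
    have hyS' : Function.update y i true ∈ {z : Fin n → Bool | ∀ j, i < j → z j = false} := by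
      intro j hj
      rw [Function.update_of_ne (ne_of_gt hj)]
      exact hyS j hj.le
    apply hxP (Function.update y i true) hyS'
    obtain ⟨h1, h2, h3⟩ := hdom
    have e1 := dotB_update_true p y i hyi
    have e2 := dotB_update_true w y i hyi
    have e3 : dotB p x = dotB p x' + p i := by rw [← hupd]; exact dotB_update_true p x' i hx'i
    have e4 : dotB w x = dotB w x' + w i := by rw [← hupd]; exact dotB_update_true w x' i hx'i
    refine ⟨by rw [e1, e3]; linarith, by rw [e2, e4]; linarith, ?_⟩
    rcases h3 with h | h
    · left; rw [e1, e3]; linarith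
    · right; rw [e2, e4]; linarith
  · -- left component
    left
    have hxi' : x i = false := by simpa using hxi
    have hxS' : x ∈ {y : Fin n → Bool | ∀ j, i ≤ j → y j = false} := by
      intro j hj
      rcases eq_or_lt_of_le hj with h | h
      · rw [← h]; exact hxi'
      · exact hxS j h
    refine ⟨hxS', fun y hy => hxP y (fun j hj => hy j hj.le)⟩
end

section
/- Let w_1,...,w_n be independent real random variables, each with density bounded by φ. For every k ∈ ℕ, the probability that there exist two distinct solutions x, y ∈ {0,1}^n with |w·x − w·y| ≤ n/k is at most 2^{2n+1}·n·φ/k. -/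
open MeasureTheory
open scoped ProbabilityTheory

lemma close_prob {Ω : Type*} [MeasureSpace Ω] [IsProbabilityMeasure (ℙ : Measure Ω)]
    (X T : Ω → ℝ) (hX : Measurable X) (hT : Measurable T)
    (hXT : ProbabilityTheory.IndepFun X T ℙ) [HasPDF X ℙ]
    {φ r : ℝ} (hφ : 0 ≤ φ)
    (hb : ∀ᵐ x : ℝ, pdf X ℙ volume x ≤ ENNReal.ofReal φ) :
    ℙ {ω | |X ω - T ω| ≤ r} ≤ ENNReal.ofReal (2 * φ * r) := by
  have hmap := (ProbabilityTheory.indepFun_iff_map_prod_eq_prod_map_map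
      hT.aemeasurable hX.aemeasurable).mp hXT.symm
  set s : Set (ℝ × ℝ) := {p | |p.2 - p.1| ≤ r} with hs_def
  have hs : MeasurableSet s := by
    have : s = {p : ℝ × ℝ | |p.2 - p.1| ≤ r} := rfl
    apply measurableSet_le (by fun_prop) measurable_const
  have hpre : {ω | |X ω - T ω| ≤ r} = (fun ω => (T ω, X ω)) ⁻¹' s := rfl
  rw [hpre, ← Measure.map_apply (hT.prodMk hX) hs, hmap, Measure.prod_apply hs]
  have hslice : ∀ t : ℝ, (Prod.mk t ⁻¹' s) = Set.Icc (t - r) (t + r) := by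
    intro t
    ext x
    simp only [Set.mem_preimage, hs_def, Set.mem_setOf_eq, Set.mem_Icc, abs_le]
    constructor <;> intro h <;> constructor <;> linarith [h.1, h.2]
  have hXmeas : ∀ t : ℝ, (Measure.map X ℙ) (Prod.mk t ⁻¹' s) ≤ ENNReal.ofReal φ * ENNReal.ofReal (2 * r) := by
    intro t
    rw [hslice t, map_eq_setLIntegral_pdf X ℙ volume measurableSet_Icc]
    calc ∫⁻ x in Set.Icc (t - r) (t + r), pdf X ℙ volume x
        ≤ ∫⁻ _ in Set.Icc (t - r) (t + r), ENNReal.ofReal φ :=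
          setLIntegral_mono_ae (by fun_prop) (hb.mono fun x hx _ => hx) |>.trans_eq rfl
      _ = ENNReal.ofReal φ * volume (Set.Icc (t - r) (t + r)) := by
          rw [setLIntegral_const]
      _ = ENNReal.ofReal φ * ENNReal.ofReal (2 * r) := by
          rw [Real.volume_Icc]; ring_nf
  calc ∫⁻ t, (Measure.map X ℙ) (Prod.mk t ⁻¹' s) ∂(Measure.map T ℙ)
      ≤ ∫⁻ _, ENNReal.ofReal φ * ENNReal.ofReal (2 * r) ∂(Measure.map T ℙ) :=
        lintegral_mono hXmeas
    _ = ENNReal.ofReal φ * ENNReal.ofReal (2 * r) := by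
        have : IsProbabilityMeasure (Measure.map T ℙ) := Measure.isProbabilityMeasure_map hT.aemeasurable
        simp
    _ = ENNReal.ofReal (2 * φ * r) := by
        rw [← ENNReal.ofReal_mul hφ]; ring_nf

lemma iIndepFun_congr_ae {ι Ω : Type*} [MeasurableSpace Ω] {μ : Measure Ω}
    {f g : ι → Ω → ℝ}
    (h : ProbabilityTheory.iIndepFun f μ)
    (hfg : ∀ i, f i =ᵐ[μ] g i) :
    ProbabilityTheory.iIndepFun g μ := by
  rw [ProbabilityTheory.iIndepFun_iff_measure_inter_preimage_eq_mul] at h ⊢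
  intro S sets hsets
  have hpre : ∀ i : ι, g i ⁻¹' sets i =ᵐ[μ] f i ⁻¹' sets i := by
    intro i
    filter_upwards [hfg i] with ω hω
    show (g i ω ∈ sets i) = (f i ω ∈ sets i)
    rw [hω]
  have hint : (⋂ i ∈ S, g i ⁻¹' sets i) =ᵐ[μ] (⋂ i ∈ S, f i ⁻¹' sets i) := by
    have hall : ∀ᵐ ω ∂μ, ∀ i ∈ S, (ω ∈ g i ⁻¹' sets i ↔ ω ∈ f i ⁻¹' sets i) := by
      rw [Filter.eventually_all_finset]
      intro i _
      filter_upwards [hpre i] with ω hω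
      exact eq_iff_iff.mp hω
    filter_upwards [hall] with ω hω
    show (ω ∈ ⋂ i ∈ S, g i ⁻¹' sets i) = (ω ∈ ⋂ i ∈ S, f i ⁻¹' sets i)
    simp only [Set.mem_iInter, eq_iff_iff]
    exact ⟨fun hx i hi => (hω i hi).mp (hx i hi), fun hx i hi => (hω i hi).mpr (hx i hi)⟩
  rw [measure_congr hint, h S hsets]
  exact Finset.prod_congr rfl fun i _ => (measure_congr (hpre i)).symm

lemma pair_bound {Ω : Type*} [MeasureSpace Ω] [IsProbabilityMeasure (ℙ : Measure Ω)] {n : ℕ}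
    (V : Fin n → Ω → ℝ) (hVm : ∀ i, Measurable (V i))
    (hindep : ProbabilityTheory.iIndepFun V ℙ)
    (hpdf : ∀ i, HasPDF (V i) ℙ) {φ : ℝ} (hφ : 0 ≤ φ)
    (hbound : ∀ i, ∀ᵐ x : ℝ, pdf (V i) ℙ volume x ≤ ENNReal.ofReal φ)
    (r : ℝ) (x y : Fin n → Bool) (hxy : x ≠ y) :
    ℙ {ω | |dotB (fun i => V i ω) x - dotB (fun i => V i ω) y| ≤ r}
      ≤ ENNReal.ofReal (2 * φ * r) := by
  classical
  obtain ⟨i₀, hi₀⟩ := Function.ne_iff.mp hxy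
  set ε : Fin n → ℝ := fun j => (if x j then (1:ℝ) else 0) - (if y j then 1 else 0) with hε
  have hdiff : ∀ ω, dotB (fun i => V i ω) x - dotB (fun i => V i ω) y
      = ∑ j, V j ω * ε j := by
    intro ω
    simp only [dotB, hε, ← Finset.sum_sub_distrib]
    exact Finset.sum_congr rfl fun j _ => (mul_sub _ _ _).symm
  have hε1 : ε i₀ = 1 ∨ ε i₀ = -1 := by
    cases hx : x i₀ <;> cases hy : y i₀ <;>
      first
        | exact absurd (hx.trans hy.symm) hi₀
        | simp [hε, hx, hy]
  have hεsq : ε i₀ * ε i₀ = 1 := by rcases hε1 with h | h <;> rw [h] <;> norm_num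
  have hεabs : |ε i₀| = 1 := by rcases hε1 with h | h <;> rw [h] <;> norm_num
  set S : Ω → ℝ := fun ω => ∑ j ∈ Finset.univ.erase i₀, V j ω * ε j with hS
  set T : Ω → ℝ := fun ω => (-ε i₀) * S ω with hT
  have hSm : Measurable S := Finset.measurable_sum _ fun j _ => (hVm j).mul_const _
  have hTm : Measurable T := hSm.const_mul _
  have hd : Disjoint ({i₀} : Finset (Fin n)) (Finset.univ.erase i₀) := by
    simp [Finset.disjoint_left]
  have h1 := hindep.indepFun_finset {i₀} (Finset.univ.erase i₀) hd hVm
  set g₁ : ({ j : Fin n // j ∈ ({i₀} : Finset (Fin n)) } → ℝ) → ℝ :=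
    fun v => v ⟨i₀, Finset.mem_singleton_self i₀⟩ with hg₁def
  set g₂ : ({ j : Fin n // j ∈ Finset.univ.erase i₀ } → ℝ) → ℝ :=
    fun v => (-ε i₀) * ∑ j, v j * ε j.1 with hg₂def
  have hg₁m : Measurable g₁ := measurable_pi_apply _
  have hg₂m : Measurable g₂ := by
    apply Measurable.const_mul
    exact Finset.measurable_sum _ fun j _ => (measurable_pi_apply j).mul_const _
  have h2 := h1.comp hg₁m hg₂m
  have hc1 : (g₁ ∘ fun a (i : { j : Fin n // j ∈ ({i₀} : Finset (Fin n)) }) => V i a) = V i₀ := rfl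
  have hc2 : (g₂ ∘ fun a (i : { j : Fin n // j ∈ Finset.univ.erase i₀ }) => V i a) = T := by
    funext a
    simp only [Function.comp, hg₂def, hT, hS]
    congr 1
    exact Finset.sum_coe_sort (Finset.univ.erase i₀) (fun j => V j a * ε j)
  rw [hc1, hc2] at h2
  have hkey : ∀ ω, |dotB (fun i => V i ω) x - dotB (fun i => V i ω) y| = |V i₀ ω - T ω| := by
    intro ω
    rw [hdiff ω]
    have hsplit : ∑ j, V j ω * ε j = V i₀ ω * ε i₀ + S ω := by
      rw [hS]
      exact (Finset.add_sum_erase Finset.univ (fun j => V j ω * ε j)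
        (Finset.mem_univ i₀)).symm
    have hsum : ∑ j, V j ω * ε j = ε i₀ * (V i₀ ω - T ω) := by
      rw [hsplit]
      simp only [hT]
      rcases hε1 with h | h <;> rw [h] <;> ring
    rw [hsum, abs_mul, hεabs, one_mul]
  have hset : {ω | |dotB (fun i => V i ω) x - dotB (fun i => V i ω) y| ≤ r}
      = {ω | |V i₀ ω - T ω| ≤ r} := Set.ext fun ω => by rw [Set.mem_setOf, hkey ω]; rfl
  rw [hset]
  haveI := hpdf i₀
  exact close_prob (V i₀) T (hVm i₀) hTm h2 hφ (hbound i₀)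

/-- For independent weights with densities bounded by `φ`, the probability that two
distinct solutions have weights within `n/k` of each other is at most `2^{2n+1}·n·φ/k`. -/
theorem prob_close_weights {Ω : Type*} [MeasureSpace Ω]
    [IsProbabilityMeasure (ℙ : Measure Ω)] {n : ℕ}
    (W : Fin n → Ω → ℝ) (φ : ℝ) (hφ : 0 < φ)
    (hindep : ProbabilityTheory.iIndepFun W ℙ)
    (hpdf : ∀ i, HasPDF (W i) ℙ)
    (hbound : ∀ i, ∀ᵐ x : ℝ, pdf (W i) ℙ volume x ≤ ENNReal.ofReal φ)
    (k : ℕ) (hk : 0 < k) :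
    ℙ {ω | ∃ x y : Fin n → Bool, x ≠ y ∧
        |dotB (fun i => W i ω) x - dotB (fun i => W i ω) y| ≤ (n : ℝ) / k}
      ≤ ENNReal.ofReal (2 ^ (2 * n + 1) * n * φ / k) := by
  classical
  set r : ℝ := (n : ℝ) / k with hr_def
  have hWae : ∀ i, AEMeasurable (W i) ℙ := fun i => by
    haveI := hpdf i; exact HasPDF.aemeasurable (W i) ℙ volume
  set V : Fin n → Ω → ℝ := fun i => (hWae i).mk (W i) with hV_def
  have hVm : ∀ i, Measurable (V i) := fun i => (hWae i).measurable_mk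
  have hVe : ∀ i, W i =ᵐ[ℙ] V i := fun i => (hWae i).ae_eq_mk
  have hindepV : ProbabilityTheory.iIndepFun V ℙ :=
    iIndepFun_congr_ae hindep hVe
  have hpdfV : ∀ i, HasPDF (V i) ℙ := fun i => by
    haveI := hpdf i; exact HasPDF.congr (hVe i)
  have hpdfeq : ∀ i, pdf (V i) ℙ volume = pdf (W i) ℙ volume := fun i => by
    simp only [pdf_def]
    rw [← Measure.map_congr (hVe i)]
  have hboundV : ∀ i, ∀ᵐ x : ℝ, pdf (V i) ℙ volume x ≤ ENNReal.ofReal φ := fun i => by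
    rw [hpdfeq i]; exact hbound i
  -- switch from W to V
  have hAB : ℙ {ω | ∃ x y : Fin n → Bool, x ≠ y ∧
        |dotB (fun i => W i ω) x - dotB (fun i => W i ω) y| ≤ r}
      = ℙ {ω | ∃ x y : Fin n → Bool, x ≠ y ∧
        |dotB (fun i => V i ω) x - dotB (fun i => V i ω) y| ≤ r} := by
    apply measure_congr
    have hall : ∀ᵐ ω ∂ℙ, ∀ i, W i ω = V i ω := ae_all_iff.mpr hVe
    filter_upwards [hall] with ω hω
    have hfun : (fun i => W i ω) = fun i => V i ω := funext hω
    show (ω ∈ {ω | ∃ x y : Fin n → Bool, x ≠ y ∧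
        |dotB (fun i => W i ω) x - dotB (fun i => W i ω) y| ≤ r})
      = (ω ∈ {ω | ∃ x y : Fin n → Bool, x ≠ y ∧
        |dotB (fun i => V i ω) x - dotB (fun i => V i ω) y| ≤ r})
    simp only [Set.mem_setOf_eq, hfun]
  rw [hAB]
  -- union bound
  have hsub : {ω | ∃ x y : Fin n → Bool, x ≠ y ∧
        |dotB (fun i => V i ω) x - dotB (fun i => V i ω) y| ≤ r}
      ⊆ ⋃ p : (Fin n → Bool) × (Fin n → Bool),
        {ω | |dotB (fun i => V i ω) p.1 - dotB (fun i => V i ω) p.2| ≤ r ∧ p.1 ≠ p.2} := by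
    rintro ω ⟨x, y, hxy, hle⟩
    exact Set.mem_iUnion.mpr ⟨(x, y), hle, hxy⟩
  have hpair : ∀ p : (Fin n → Bool) × (Fin n → Bool),
      ℙ {ω | |dotB (fun i => V i ω) p.1 - dotB (fun i => V i ω) p.2| ≤ r ∧ p.1 ≠ p.2}
        ≤ ENNReal.ofReal (2 * φ * r) := by
    intro p
    by_cases h : p.1 = p.2
    · simp [h]
    · calc ℙ {ω | |dotB (fun i => V i ω) p.1 - dotB (fun i => V i ω) p.2| ≤ r ∧ p.1 ≠ p.2}
          ≤ ℙ {ω | |dotB (fun i => V i ω) p.1 - dotB (fun i => V i ω) p.2| ≤ r} :=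
            measure_mono fun ω hω => hω.1
        _ ≤ ENNReal.ofReal (2 * φ * r) :=
            pair_bound V hVm hindepV hpdfV hφ.le hboundV r p.1 p.2 h
  have hcard : (Fintype.card ((Fin n → Bool) × (Fin n → Bool)) : ℝ) = 2 ^ n * 2 ^ n := by
    simp [Fintype.card_prod, Fintype.card_fun]
  calc ℙ {ω | ∃ x y : Fin n → Bool, x ≠ y ∧
        |dotB (fun i => V i ω) x - dotB (fun i => V i ω) y| ≤ r}
      ≤ ∑' p : (Fin n → Bool) × (Fin n → Bool),
          ℙ {ω | |dotB (fun i => V i ω) p.1 - dotB (fun i => V i ω) p.2| ≤ r ∧ p.1 ≠ p.2} :=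
        (measure_mono hsub).trans (measure_iUnion_le _)
    _ ≤ ∑' _p : (Fin n → Bool) × (Fin n → Bool), ENNReal.ofReal (2 * φ * r) :=
        ENNReal.tsum_le_tsum hpair
    _ = (Fintype.card ((Fin n → Bool) × (Fin n → Bool)) : ENNReal) * ENNReal.ofReal (2 * φ * r) := by
        rw [tsum_fintype]
        simp [Finset.sum_const, nsmul_eq_mul]
    _ ≤ ENNReal.ofReal (2 ^ (2 * n + 1) * n * φ / k) := by
        rw [show ((Fintype.card ((Fin n → Bool) × (Fin n → Bool)) : ℕ) : ENNReal)
            = ENNReal.ofReal ((Fintype.card ((Fin n → Bool) × (Fin n → Bool)) : ℕ) : ℝ) by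
          rw [ENNReal.ofReal_natCast]]
        rw [← ENNReal.ofReal_mul (by positivity)]
        apply ENNReal.ofReal_le_ofReal
        rw [hcard, hr_def]
        have hk' : (0:ℝ) < k := by exact_mod_cast hk
        apply le_of_eq
        field_simp
        ring
end

section
/- Fix profits p_1,...,p_n ∈ ℝ≥0 and let w_1,...,w_n be independent nonnegative random variables each with density bounded by φ. For every t ≥ 0 and ε > 0, the probability that there exists a Pareto-optimal solution x ∈ {0,1}^n with w·x ∈ (t, t+ε] is at most n·φ·ε. -/
open MeasureTheory
open scoped ProbabilityTheory

section aux
open Classical in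
noncomputable def Pm {n : ℕ} (p : Fin n → ℝ) (t : ℝ) (i : Fin n) (w : Fin n → ℝ) : ℝ :=
  Finset.univ.sup' Finset.univ_nonempty
    (fun y : Fin n → Bool =>
      if y i = false ∧ dotB (Function.update w i 0) y ≤ t then dotB p y else 0)

open Classical in
noncomputable def gfun {n : ℕ} (p : Fin n → ℝ) (t ε : ℝ) (i : Fin n) (w : Fin n → ℝ) : ℝ :=
  Finset.univ.inf' Finset.univ_nonempty
    (fun x : Fin n → Bool =>
      if x i = true ∧ Pm p t i w < dotB p x then dotB (Function.update w i 0) x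
      else t + ε + 1)

lemma dotB_nonneg {n : ℕ} {c : Fin n → ℝ} (hc : ∀ i, 0 ≤ c i) (x : Fin n → Bool) :
    0 ≤ dotB c x := by
  refine Finset.sum_nonneg fun i _ => mul_nonneg (hc i) ?_
  split <;> norm_num

lemma dotB_update_of_false {n : ℕ} {w : Fin n → ℝ} {i : Fin n} {x : Fin n → Bool}
    (h : x i = false) : dotB (Function.update w i 0) x = dotB w x := by
  unfold dotB
  refine Finset.sum_congr rfl fun j _ => ?_
  rcases eq_or_ne j i with rfl | hj
  · simp [h]
  · simp [Function.update_of_ne hj]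

lemma dotB_eq_add {n : ℕ} {w : Fin n → ℝ} {i : Fin n} {x : Fin n → Bool}
    (h : x i = true) : dotB w x = w i + dotB (Function.update w i 0) x := by
  unfold dotB
  rw [← Finset.add_sum_erase _ _ (Finset.mem_univ i), h]
  simp only [if_true, mul_one]
  congr 1
  rw [← Finset.add_sum_erase _ _ (Finset.mem_univ i), Function.update_self, zero_mul, zero_add]
  refine Finset.sum_congr rfl fun j hj => ?_
  rw [Function.update_of_ne (Finset.ne_of_mem_erase hj)]

lemma measurable_dotB {n : ℕ} (x : Fin n → Bool) :
    Measurable (fun w : Fin n → ℝ => dotB w x) := by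
  unfold dotB
  exact Finset.measurable_sum _ fun j _ => (measurable_pi_apply j).mul_const _

lemma measurable_update0 {n : ℕ} (i : Fin n) :
    Measurable (fun w : Fin n → ℝ => Function.update w i 0) := by
  refine measurable_pi_lambda _ fun j => ?_
  rcases eq_or_ne j i with rfl | hj
  · simp only [Function.update_self]; exact measurable_const
  · simp only [Function.update_of_ne hj]; exact measurable_pi_apply j

end aux

def pareto {n : ℕ} (p w : Fin n → ℝ) (x : Fin n → Bool) : Prop :=
  ∀ y : Fin n → Bool, ¬ dominates p w y x

section aux2
variable {n : ℕ}

lemma measurable_Pm (p : Fin n → ℝ) (t : ℝ) (i : Fin n) :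
    Measurable (fun w : Fin n → ℝ => Pm p t i w) := by
  classical
  unfold Pm
  have : ∀ y : Fin n → Bool, Measurable (fun w : Fin n → ℝ =>
      if y i = false ∧ dotB (Function.update w i 0) y ≤ t then dotB p y else 0) := by
    intro y
    have hms : MeasurableSet {w : Fin n → ℝ |
        y i = false ∧ dotB (Function.update w i 0) y ≤ t} := by
      by_cases hyi : y i = false
      · have : {w : Fin n → ℝ | y i = false ∧ dotB (Function.update w i 0) y ≤ t}
            = {w : Fin n → ℝ | dotB (Function.update w i 0) y ≤ t} := by
          ext w; simp [hyi]
        rw [this]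
        exact measurableSet_le ((measurable_dotB y).comp (measurable_update0 i))
          measurable_const
      · have : {w : Fin n → ℝ | y i = false ∧ dotB (Function.update w i 0) y ≤ t} = ∅ := by
          ext w; simp [hyi]
        rw [this]; exact MeasurableSet.empty
    exact Measurable.ite hms measurable_const measurable_const
  have h := Finset.measurable_sup' (s := (Finset.univ : Finset (Fin n → Bool)))
    Finset.univ_nonempty (fun y _ => this y)
  convert h using 1
  funext w
  simp [Finset.sup'_apply]

lemma measurable_inf'' {α : Type*} [MeasurableSpace α] {ι : Type*} {s : Finset ι}
    (hs : s.Nonempty) {f : ι → α → ℝ} (hf : ∀ n ∈ s, Measurable (f n)) :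
    Measurable (fun a => s.inf' hs fun i => f i a) := by
  have : Measurable (s.inf' hs f) :=
    Finset.inf'_induction hs _ (fun _f hf _g hg => hf.inf hg) fun n hn => hf n hn
  convert this using 1
  funext a
  simp [Finset.inf'_apply]

lemma measurable_gfun (p : Fin n → ℝ) (t ε : ℝ) (i : Fin n) :
    Measurable (fun w : Fin n → ℝ => gfun p t ε i w) := by
  classical
  unfold gfun
  refine measurable_inf'' Finset.univ_nonempty fun x _ => ?_
  have hms : MeasurableSet {w : Fin n → ℝ | x i = true ∧ Pm p t i w < dotB p x} := by
    by_cases hxi : ¬ (x i = true)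
    · have : {w : Fin n → ℝ | x i = true ∧ Pm p t i w < dotB p x} = ∅ := by
        ext w; simp [hxi]
      rw [this]; exact MeasurableSet.empty
    · rw [not_not] at hxi
      have : {w : Fin n → ℝ | x i = true ∧ Pm p t i w < dotB p x}
          = {w : Fin n → ℝ | Pm p t i w < dotB p x} := by
        ext w; simp [hxi]
      rw [this]
      exact measurableSet_lt (measurable_Pm p t i) measurable_const
  exact Measurable.ite hms ((measurable_dotB x).comp (measurable_update0 i)) measurable_const

lemma Pm_update (p : Fin n → ℝ) (t : ℝ) (i : Fin n) (w : Fin n → ℝ) (a : ℝ) :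
    Pm p t i (Function.update w i a) = Pm p t i w := by
  unfold Pm
  simp [Function.update_idem]

lemma gfun_update (p : Fin n → ℝ) (t ε : ℝ) (i : Fin n) (w : Fin n → ℝ) (a : ℝ) :
    gfun p t ε i (Function.update w i a) = gfun p t ε i w := by
  unfold gfun
  simp [Function.update_idem, Pm_update]

lemma key {p : Fin n → ℝ} (hp : ∀ i, 0 ≤ p i) {t ε : ℝ} (ht : 0 ≤ t) (hε : 0 < ε)
    {w : Fin n → ℝ} (hw : ∀ j, 0 ≤ w j) {x : Fin n → Bool}
    (hx : pareto p w x) (hmem : dotB w x ∈ Set.Ioc t (t + ε)) :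
    ∃ i, w i + gfun p t ε i w ∈ Set.Ioc t (t + ε) := by
  classical
  set F : Finset (Fin n → Bool) := Finset.univ.filter (fun y => dotB w y ≤ t) with hF
  have hFne : F.Nonempty := ⟨fun _ => false, by simp [hF, dotB, ht]⟩
  obtain ⟨yh, hyhF, hyh⟩ := F.exists_max_image (dotB p) hFne
  have hyh_w : dotB w yh ≤ t := (Finset.mem_filter.mp hyhF).2
  have hyh_max : ∀ y : Fin n → Bool, dotB w y ≤ t → dotB p y ≤ dotB p yh := fun y hy =>
    hyh y (Finset.mem_filter.mpr ⟨Finset.mem_univ _, hy⟩)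
  have hpx : dotB p yh < dotB p x := by
    by_contra hle; push_neg at hle
    exact hx yh ⟨hle, le_trans hyh_w (le_of_lt hmem.1), Or.inr (lt_of_le_of_lt hyh_w hmem.1)⟩
  have hexi : ∃ i, x i = true ∧ yh i = false := by
    by_contra hc; push_neg at hc
    have : dotB p x ≤ dotB p yh := by
      refine Finset.sum_le_sum fun j _ => ?_
      by_cases hxj : x j = true
      · have h2 : yh j = true := Bool.ne_false_iff.mp (hc j hxj)
        simp [hxj, h2]
      · rw [if_neg hxj, mul_zero]
        exact mul_nonneg (hp j) (by split <;> norm_num)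
    exact absurd this (not_le.mpr hpx)
  obtain ⟨i, hxi, hyi⟩ := hexi
  have hPm : Pm p t i w = dotB p yh := by
    apply le_antisymm
    · apply Finset.sup'_le
      intro y _
      split_ifs with h
      · exact hyh_max y (by rw [← dotB_update_of_false h.1]; exact h.2)
      · exact dotB_nonneg hp yh
    · have h := Finset.le_sup' (b := yh)
        (fun y : Fin n → Bool =>
          if y i = false ∧ dotB (Function.update w i 0) y ≤ t then dotB p y else 0)
        (Finset.mem_univ yh)
      rwa [if_pos ⟨hyi, by rw [dotB_update_of_false hyi]; exact hyh_w⟩] at h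
  set f : (Fin n → Bool) → ℝ := fun x' =>
    if x' i = true ∧ Pm p t i w < dotB p x' then dotB (Function.update w i 0) x'
    else t + ε + 1 with hf
  have hgf : gfun p t ε i w = Finset.univ.inf' Finset.univ_nonempty f := rfl
  have hcondx : x i = true ∧ Pm p t i w < dotB p x := ⟨hxi, by rw [hPm]; exact hpx⟩
  have hup : gfun p t ε i w ≤ dotB (Function.update w i 0) x := by
    have h : gfun p t ε i w ≤ f x := Finset.inf'_le f (Finset.mem_univ x)
    simp only [hf, if_pos hcondx] at h
    exact h
  have hsum : w i + dotB (Function.update w i 0) x = dotB w x := (dotB_eq_add hxi).symm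
  refine ⟨i, ?_, by have := hmem.2; linarith⟩
  obtain ⟨x0, _, hx0⟩ := Finset.exists_mem_eq_inf' Finset.univ_nonempty f
  rw [hgf, hx0]
  simp only [hf]
  split_ifs with h
  · have hne : t < dotB w x0 := by
      by_contra hle; push_neg at hle
      exact absurd (hyh_max x0 hle) (not_le.mpr (hPm ▸ h.2))
    have := dotB_eq_add (w := w) h.1
    linarith
  · have := hw i; linarith

end aux2

lemma prob_slab {Ω : Type*} [MeasureSpace Ω] [IsProbabilityMeasure (ℙ : Measure Ω)]
    (X C : Ω → ℝ) (hX : Measurable X) (hC : Measurable C)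
    [HasPDF X ℙ] {φ : ℝ} (hφ : 0 < φ)
    (hbound : ∀ᵐ x : ℝ, pdf X ℙ volume x ≤ ENNReal.ofReal φ)
    (hind : ProbabilityTheory.IndepFun X C ℙ) (t ε : ℝ) (hε : 0 < ε) :
    ℙ {ω | X ω + C ω ∈ Set.Ioc t (t + ε)} ≤ ENNReal.ofReal (φ * ε) := by
  classical
  set s : Set (ℝ × ℝ) := (fun q : ℝ × ℝ => q.2 + q.1) ⁻¹' Set.Ioc t (t + ε) with hs
  have hsm : MeasurableSet s := (measurable_snd.add measurable_fst) measurableSet_Ioc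
  have hpre : {ω | X ω + C ω ∈ Set.Ioc t (t + ε)} = (fun ω => (C ω, X ω)) ⁻¹' s := rfl
  haveI : IsProbabilityMeasure (Measure.map C ℙ) := Measure.isProbabilityMeasure_map hC.aemeasurable
  haveI : IsProbabilityMeasure (Measure.map X ℙ) := Measure.isProbabilityMeasure_map hX.aemeasurable
  rw [hpre, ← Measure.map_apply (hC.prodMk hX) hsm]
  have hmap : Measure.map (fun ω => (C ω, X ω)) ℙ = (Measure.map C ℙ).prod (Measure.map X ℙ) :=
    (ProbabilityTheory.indepFun_iff_map_prod_eq_prod_map_map hC.aemeasurable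
      hX.aemeasurable).mp hind.symm
  rw [hmap, Measure.prod_apply hsm]
  have hXa : ∀ b : ℝ, (Measure.map X ℙ) (Prod.mk b ⁻¹' s) ≤ ENNReal.ofReal (φ * ε) := by
    intro b
    have hps : Prod.mk b ⁻¹' s = Set.Ioc (t - b) (t + ε - b) := by
      ext a
      simp only [hs, Set.mem_preimage, Set.mem_Ioc]
      constructor <;> intro h <;> exact ⟨by linarith [h.1], by linarith [h.2]⟩
    rw [hps, map_eq_withDensity_pdf X ℙ volume, withDensity_apply _ measurableSet_Ioc]
    calc ∫⁻ a in Set.Ioc (t - b) (t + ε - b), pdf X ℙ volume a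
        ≤ ∫⁻ _a in Set.Ioc (t - b) (t + ε - b), ENNReal.ofReal φ :=
          lintegral_mono_ae (ae_restrict_of_ae hbound)
      _ = ENNReal.ofReal φ * volume (Set.Ioc (t - b) (t + ε - b)) := by
          rw [setLIntegral_const]
      _ = ENNReal.ofReal (φ * ε) := by
          rw [Real.volume_Ioc, ← ENNReal.ofReal_mul hφ.le]
          congr 1; ring
  calc ∫⁻ b, (Measure.map X ℙ) (Prod.mk b ⁻¹' s) ∂(Measure.map C ℙ)
      ≤ ∫⁻ _b, ENNReal.ofReal (φ * ε) ∂(Measure.map C ℙ) := lintegral_mono fun b => hXa b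
    _ = ENNReal.ofReal (φ * ε) := by simp

/-- For fixed nonnegative profits and independent nonnegative weights with densities
bounded by `φ`: for every `t ≥ 0` and `ε > 0`, the probability that some Pareto-optimal
solution has weight in `(t, t+ε]` is at most `n·φ·ε`. -/
theorem prob_pareto_in_interval {Ω : Type*} [MeasureSpace Ω]
    [IsProbabilityMeasure (ℙ : Measure Ω)] {n : ℕ}
    (p : Fin n → ℝ) (hp : ∀ i, 0 ≤ p i)
    (W : Fin n → Ω → ℝ) (φ : ℝ) (hφ : 0 < φ)
    (hindep : ProbabilityTheory.iIndepFun W ℙ)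
    (hnonneg : ∀ i, ∀ᵐ ω ∂ℙ, 0 ≤ W i ω)
    (hpdf : ∀ i, HasPDF (W i) ℙ)
    (hbound : ∀ i, ∀ᵐ x : ℝ, pdf (W i) ℙ volume x ≤ ENNReal.ofReal φ)
    (t ε : ℝ) (ht : 0 ≤ t) (hε : 0 < ε) :
    ℙ {ω | ∃ x : Fin n → Bool, pareto p (fun i => W i ω) x ∧
        dotB (fun i => W i ω) x ∈ Set.Ioc t (t + ε)}
      ≤ ENNReal.ofReal (n * φ * ε) := by
  classical
  have hWae : ∀ i, AEMeasurable (W i) ℙ := fun i => letI := hpdf i;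
    HasPDF.aemeasurable (W i) ℙ volume
  set W' : Fin n → Ω → ℝ := fun i => (hWae i).mk (W i) with hW'def
  have hW'm : ∀ i, Measurable (W' i) := fun i => (hWae i).measurable_mk
  have hW'ae : ∀ i, W i =ᵐ[ℙ] W' i := fun i => (hWae i).ae_eq_mk
  have hae : ∀ᵐ ω ∂ℙ, ∀ i, W i ω = W' i ω := ae_all_iff.mpr hW'ae
  have hmap_eq : ∀ i, Measure.map (W i) ℙ = Measure.map (W' i) ℙ := fun i =>
    Measure.map_congr (hW'ae i)
  have hpdf' : ∀ i, HasPDF (W' i) ℙ := fun i => by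
    haveI := hpdf i; exact HasPDF.congr (hW'ae i)
  have hpdfeq : ∀ i, pdf (W' i) ℙ volume = pdf (W i) ℙ volume := fun i => by
    simp only [pdf_def, hmap_eq]
  have hbound' : ∀ i, ∀ᵐ x : ℝ, pdf (W' i) ℙ volume x ≤ ENNReal.ofReal φ := fun i => by
    rw [hpdfeq]; exact hbound i
  have hnonneg' : ∀ i, ∀ᵐ ω ∂ℙ, 0 ≤ W' i ω := fun i =>
    ((hnonneg i).and (hW'ae i)).mono fun ω h => h.2 ▸ h.1
  -- transfer independence to the measurable modification
  have hindep' : ProbabilityTheory.iIndepFun W' ℙ := by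
    rw [ProbabilityTheory.iIndepFun_iff_measure_inter_preimage_eq_mul] at hindep ⊢
    intro S sets hsets
    have h1 : ℙ (⋂ i ∈ S, W' i ⁻¹' sets i) = ℙ (⋂ i ∈ S, W i ⁻¹' sets i) := by
      refine measure_congr (Filter.eventuallyEq_set.mpr ?_)
      filter_upwards [hae] with ω hω
      simp only [Set.mem_iInter, Set.mem_preimage]
      constructor <;> intro h i hi
      · rw [hω i]; exact h i hi
      · rw [← hω i]; exact h i hi
    have h2 : ∀ i, ℙ (W' i ⁻¹' sets i) = ℙ (W i ⁻¹' sets i) := fun i => by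
      refine measure_congr (Filter.eventuallyEq_set.mpr ?_)
      filter_upwards [hae] with ω hω
      simp [Set.mem_preimage, hω i]
    rw [h1, hindep S hsets]
    exact Finset.prod_congr rfl fun i _ => (h2 i).symm
  set E' : Set Ω := {ω | ∃ x : Fin n → Bool, pareto p (fun i => W' i ω) x ∧
      dotB (fun i => W' i ω) x ∈ Set.Ioc t (t + ε)} with hE'
  have hEE' : ℙ {ω | ∃ x : Fin n → Bool, pareto p (fun i => W i ω) x ∧
      dotB (fun i => W i ω) x ∈ Set.Ioc t (t + ε)} = ℙ E' := by
    refine measure_congr (Filter.eventuallyEq_set.mpr ?_)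
    filter_upwards [hae] with ω hω
    have hfun : (fun i => W i ω) = fun i => W' i ω := funext fun i => hω i
    simp only [Set.mem_setOf_eq, hE', hfun]
  set B : Fin n → Set Ω := fun i =>
    {ω | W' i ω + gfun p t ε i (fun j => W' j ω) ∈ Set.Ioc t (t + ε)} with hB
  set N : Set Ω := {ω | ¬ ∀ j, 0 ≤ W' j ω} with hN
  have hNnull : ℙ N = 0 := ae_iff.mp (ae_all_iff.mpr hnonneg')
  have hsub : E' ⊆ (⋃ i, B i) ∪ N := by
    intro ω hω
    by_cases hωN : ω ∈ N
    · exact Or.inr hωN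
    · left
      have hwpos : ∀ j, 0 ≤ W' j ω := not_not.mp hωN
      obtain ⟨x, hx1, hx2⟩ := hω
      obtain ⟨i, hi⟩ := key hp ht hε hwpos hx1 hx2
      exact Set.mem_iUnion.mpr ⟨i, hi⟩
  have hBi : ∀ i, ℙ (B i) ≤ ENNReal.ofReal (φ * ε) := by
    intro i
    set T : Finset (Fin n) := {i}ᶜ with hT
    have hd : Disjoint ({i} : Finset (Fin n)) T :=
      Finset.disjoint_singleton_left.mpr (by simp [hT])
    have hIF := hindep'.indepFun_finset {i} T hd hW'm
    set gS : ({x // x ∈ ({i} : Finset (Fin n))} → ℝ) → ℝ :=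
      fun v => v ⟨i, Finset.mem_singleton_self i⟩ with hgS
    set gT : ({x // x ∈ T} → ℝ) → ℝ := fun v =>
      gfun p t ε i (fun j => if h : j ∈ T then v ⟨j, h⟩ else 0) with hgT
    have hgSm : Measurable gS := measurable_pi_apply _
    have hgTm : Measurable gT := by
      refine (measurable_gfun p t ε i).comp (measurable_pi_lambda _ fun j => ?_)
      by_cases h : j ∈ T
      · simp only [h, dif_pos]; exact measurable_pi_apply _
      · simp only [h, dif_neg, not_false_iff]; exact measurable_const
    have hXC := hIF.comp hgSm hgTm
    have h2 : (gT ∘ fun ω (j : {x // x ∈ T}) => W' j ω)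
        = fun ω => gfun p t ε i (fun j => W' j ω) := by
      funext ω
      show gfun p t ε i (fun j => if h : j ∈ T then W' j ω else 0) = _
      have hupd : (fun j => if _h : j ∈ T then W' j ω else 0)
          = Function.update (fun j => W' j ω) i 0 := by
        funext j
        rcases eq_or_ne j i with rfl | hj
        · simp [hT]
        · simp [hT, hj, Function.update_of_ne hj]
      rw [hupd, gfun_update]
    have h1 : (gS ∘ fun ω (j : {x // x ∈ ({i} : Finset (Fin n))}) => W' j ω) = W' i := rfl
    rw [h1, h2] at hXC
    have hCm : Measurable (fun ω => gfun p t ε i (fun j => W' j ω)) :=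
      (measurable_gfun p t ε i).comp (measurable_pi_lambda _ fun j => hW'm j)
    haveI := hpdf' i
    exact prob_slab (W' i) _ (hW'm i) hCm hφ (hbound' i) hXC t ε hε
  calc ℙ {ω | ∃ x : Fin n → Bool, pareto p (fun i => W i ω) x ∧
        dotB (fun i => W i ω) x ∈ Set.Ioc t (t + ε)}
      = ℙ E' := hEE'
    _ ≤ ℙ ((⋃ i, B i) ∪ N) := measure_mono hsub
    _ ≤ ℙ (⋃ i, B i) + ℙ N := measure_union_le _ _
    _ = ℙ (⋃ i, B i) := by rw [hNnull, add_zero]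
    _ ≤ ∑ i, ℙ (B i) := measure_iUnion_fintype_le _ _
    _ ≤ ∑ _i : Fin n, ENNReal.ofReal (φ * ε) := Finset.sum_le_sum fun i _ => hBi i
    _ = (n : ENNReal) * ENNReal.ofReal (φ * ε) := by
        simp [Finset.sum_const, Finset.card_univ, mul_comm]
    _ = ENNReal.ofReal (n * φ * ε) := by
        rw [mul_assoc, ENNReal.ofReal_mul (by positivity : (0:ℝ) ≤ (n:ℝ)),
          ENNReal.ofReal_natCast]
end

section
/- Fix t ≥ 0, profits p ∈ (ℝ≥0)^n, and nonnegative weights w ∈ (ℝ≥0)^n with all solution profits and weights distinct. Define the winner x* = argmax{p·x : w·x ≤ t} and the loser x̂ = argmin{w·x : p·x > p·x*} (if it exists), and Λ(t) = w·x̂ − t (∞ if no loser). For each i, define x*,i and x̂^i analogously but with winners restricted to solutions with x_i = 0 and losers restricted to solutions with x_i = 1, and Λ^i(t) accordingly. Then either Λ(t) = ∞ or there exists an index i ∈ [n] with Λ(t) = Λ^i(t). -/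
/-- If the loser `xhat` exists (so `Λ(t) ≠ ∞`), then there is an index `i` such that
`Λ(t) = Λ^i(t)`: there are a restricted winner `xsi` (among solutions without item `i`)
and a restricted loser `xhi` (among solutions containing item `i`) with
`w·x̂ⁱ − t = w·x̂ − t`. -/
theorem lambda_eq_restricted_lambda {n : ℕ} (p w : Fin n → ℝ)
    (hp : ∀ i, 0 ≤ p i) (hw : ∀ i, 0 ≤ w i)
    (hpinj : Function.Injective (dotB p)) (hwinj : Function.Injective (dotB w))
    (t : ℝ) (ht : 0 ≤ t)
    (xstar : Fin n → Bool)
    (hxstar : dotB w xstar ≤ t ∧ ∀ y : Fin n → Bool, dotB w y ≤ t → dotB p y ≤ dotB p xstar)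
    (xhat : Fin n → Bool)
    (hxhat : dotB p xstar < dotB p xhat ∧
      ∀ y : Fin n → Bool, dotB p xstar < dotB p y → dotB w xhat ≤ dotB w y) :
    ∃ (i : Fin n) (xsi xhi : Fin n → Bool),
      (xsi i = false ∧ dotB w xsi ≤ t ∧
        ∀ y : Fin n → Bool, y i = false → dotB w y ≤ t → dotB p y ≤ dotB p xsi) ∧
      (xhi i = true ∧ dotB p xsi < dotB p xhi ∧
        ∀ y : Fin n → Bool, y i = true → dotB p xsi < dotB p y → dotB w xhi ≤ dotB w y) ∧
      dotB w xhi - t = dotB w xhat - t := by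
  have hi : ∃ i : Fin n, xhat i = true ∧ xstar i = false := by
    by_contra h
    push_neg at h
    have hle : dotB w xhat ≤ dotB w xstar := by
      apply Finset.sum_le_sum
      intro i _
      cases hh : xhat i with
      | false => cases hs : xstar i <;> simp [hw i]
      | true =>
        have hs : xstar i = true := by
          cases hs : xstar i
          · exact absurd hs (h i hh)
          · rfl
        simp [hs]
    have hfeas : dotB w xhat ≤ t := hle.trans hxstar.1
    exact absurd (hxstar.2 xhat hfeas) (not_le.mpr hxhat.1)
  obtain ⟨i, hit, hif⟩ := hi
  refine ⟨i, xstar, xhat, ⟨hif, hxstar.1, fun y _ hy => hxstar.2 y hy⟩,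
    ⟨hit, hxhat.1, fun y _ hy => hxhat.2 y hy⟩, rfl⟩
end

section
/- Let n points be drawn independently and uniformly at random from the unit square [0,1]². Then the expected number of Pareto-optimal points (points not dominated by any other point, where (a,b) dominates (c,d) if a ≥ c and b ≥ d with at least one strict) is O(log n). More precisely, the expected number equals the harmonic number H_n = Σ_{k=1}^n 1/k. -/
open MeasureTheory
open scoped ProbabilityTheory ENNReal

section ParetoHelpers
open Set

lemma paretoAux_inner (m : ℕ) {u : ℝ} (hu0 : 0 ≤ u) (hu1 : u ≤ 1) :
    ∫ v in (0:ℝ)..1, (1 - (1-u)*(1-v))^m = (∑ j ∈ Finset.range (m+1), u^j)/(m+1) := by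
  rcases eq_or_lt_of_le hu1 with h1 | h1
  · subst h1
    simp only [sub_self, zero_mul, sub_zero, one_pow, intervalIntegral.integral_const, smul_eq_mul, mul_one, Finset.sum_const, Finset.card_range, nsmul_eq_mul]
    rw [eq_div_iff (by positivity)]
    push_cast
    ring
  · have hc : (1:ℝ) - u ≠ 0 := by linarith
    have hrw : ∀ v : ℝ, (1 - (1-u)*(1-v)) = (1-u)*v + u := by intro v; ring
    simp_rw [hrw]
    rw [intervalIntegral.integral_comp_mul_add (fun x => x^m) hc u]
    simp only [mul_zero, zero_add, mul_one, smul_eq_mul]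
    rw [show (1:ℝ) - u + u = 1 by ring, integral_pow, geom_sum_eq (ne_of_lt h1)]
    have hm : ((m:ℝ)+1) ≠ 0 := by positivity
    have hc' : u - 1 ≠ 0 := by intro h; apply hc; linarith
    field_simp
    ring

lemma paretoAux_outer (m : ℕ) :
    ∫ u in (0:ℝ)..1, (∑ j ∈ Finset.range (m+1), u^j)/(m+1)
      = (∑ k ∈ Finset.range (m+1), (1:ℝ)/(k+1))/(m+1) := by
  rw [intervalIntegral.integral_div]
  congr 1
  rw [intervalIntegral.integral_finset_sum (fun j _ => intervalIntegral.intervalIntegrable_pow j)]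
  refine Finset.sum_congr rfl fun j _ => ?_
  rw [integral_pow]
  norm_num

lemma paretoAux_sq (m : ℕ) :
    ∫ p in (Icc (0:ℝ) 1 ×ˢ Icc (0:ℝ) 1), (1 - (1-p.1)*(1-p.2))^m
      = (∑ k ∈ Finset.range (m+1), (1:ℝ)/(k+1))/(m+1) := by
  have hf : Continuous fun p : ℝ×ℝ => (1 - (1-p.1)*(1-p.2))^m :=
    (continuous_const.sub ((continuous_const.sub continuous_fst).mul
      (continuous_const.sub continuous_snd))).pow m
  have hint : IntegrableOn (fun p : ℝ×ℝ => (1 - (1-p.1)*(1-p.2))^m)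
      (Icc (0:ℝ) 1 ×ˢ Icc (0:ℝ) 1) volume :=
    hf.continuousOn.integrableOn_compact (isCompact_Icc.prod isCompact_Icc)
  have h1 : (volume : Measure (ℝ×ℝ)).restrict (Icc (0:ℝ) 1 ×ˢ Icc (0:ℝ) 1)
      = (volume.restrict (Icc (0:ℝ) 1)).prod (volume.restrict (Icc (0:ℝ) 1)) := by
    rw [Measure.prod_restrict, ← Measure.volume_eq_prod]
  have key : ∀ u ∈ Icc (0:ℝ) 1,
      (∫ v in Icc (0:ℝ) 1, (1 - (1-u)*(1-v))^m) = (∑ j ∈ Finset.range (m+1), u^j)/(m+1) := by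
    intro u hu
    rw [integral_Icc_eq_integral_Ioc, ← intervalIntegral.integral_of_le zero_le_one]
    exact paretoAux_inner m hu.1 hu.2
  rw [h1, MeasureTheory.integral_prod _ (h1 ▸ hint)]
  rw [setIntegral_congr_fun measurableSet_Icc key]
  rw [integral_Icc_eq_integral_Ioc, ← intervalIntegral.integral_of_le zero_le_one,
    paretoAux_outer]

lemma paretoAux_volS : (volume : Measure (ℝ×ℝ)) (Icc (0:ℝ) 1 ×ˢ Icc (0:ℝ) 1) = 1 := by
  rw [Measure.volume_eq_prod, Measure.prod_prod, Real.volume_Icc]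
  norm_num

lemma paretoAux_nuC (p : ℝ×ℝ) (hp : p ∈ Icc (0:ℝ) 1 ×ˢ Icc (0:ℝ) 1) :
    (volume.restrict (Icc (0:ℝ) 1 ×ˢ Icc (0:ℝ) 1))
        {q : ℝ×ℝ | ¬(p.1 ≤ q.1 ∧ p.2 ≤ q.2 ∧ q ≠ p)}
      = ENNReal.ofReal (1 - (1-p.1)*(1-p.2)) := by
  obtain ⟨⟨h01, h11⟩, h02, h12⟩ := hp
  set ν := volume.restrict (Icc (0:ℝ) 1 ×ˢ Icc (0:ℝ) 1) with hν
  have hprob : IsProbabilityMeasure ν := by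
    constructor
    rw [hν, Measure.restrict_apply_univ]
    exact paretoAux_volS
  have hAeq : {q : ℝ×ℝ | p.1 ≤ q.1 ∧ p.2 ≤ q.2 ∧ q ≠ p}
      = (Ici p.1 ×ˢ Ici p.2) \ {p} := by
    ext q
    simp only [Set.mem_setOf_eq, Set.mem_diff, Set.mem_prod, Set.mem_Ici,
      Set.mem_singleton_iff, and_assoc]
  have hAm : MeasurableSet ((Ici p.1 ×ˢ Ici p.2) \ {p} : Set (ℝ×ℝ)) :=
    (measurableSet_Ici.prod measurableSet_Ici).diff (measurableSet_singleton p)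
  have hcompl : {q : ℝ×ℝ | ¬(p.1 ≤ q.1 ∧ p.2 ≤ q.2 ∧ q ≠ p)}
      = ((Ici p.1 ×ˢ Ici p.2) \ {p})ᶜ := by
    rw [← hAeq]; ext q; simp only [Set.mem_setOf_eq, Set.mem_compl_iff]
  have hsingleton : ν ({p} : Set (ℝ×ℝ)) = 0 := by
    refine le_antisymm (le_trans (Measure.restrict_le_self _) ?_) zero_le
    have : ({p} : Set (ℝ×ℝ)) ⊆ {p.1} ×ˢ {p.2} := by
      intro q hq; simp only [Set.mem_singleton_iff] at hq; subst hq
      exact ⟨rfl, rfl⟩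
    refine le_trans (measure_mono this) ?_
    rw [Measure.volume_eq_prod, Measure.prod_prod, Real.volume_singleton, zero_mul]
  have hA : ν ((Ici p.1 ×ˢ Ici p.2) \ {p}) = ENNReal.ofReal ((1-p.1)*(1-p.2)) := by
    rw [measure_diff_null hsingleton, hν,
      Measure.restrict_apply' (measurableSet_Icc.prod measurableSet_Icc),
      Set.prod_inter_prod]
    have e1 : Ici p.1 ∩ Icc (0:ℝ) 1 = Icc p.1 1 := by
      ext x; simp only [Set.mem_inter_iff, Set.mem_Ici, Set.mem_Icc]
      constructor
      · rintro ⟨h, -, h2⟩; exact ⟨h, h2⟩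
      · rintro ⟨h, h2⟩; exact ⟨h, by linarith, h2⟩
    have e2 : Ici p.2 ∩ Icc (0:ℝ) 1 = Icc p.2 1 := by
      ext x; simp only [Set.mem_inter_iff, Set.mem_Ici, Set.mem_Icc]
      constructor
      · rintro ⟨h, -, h2⟩; exact ⟨h, h2⟩
      · rintro ⟨h, h2⟩; exact ⟨h, by linarith, h2⟩
    rw [e1, e2, Measure.volume_eq_prod, Measure.prod_prod, Real.volume_Icc, Real.volume_Icc,
      ENNReal.ofReal_mul (by linarith)]
  rw [hcompl, measure_compl hAm (measure_ne_top ν _), hA, measure_univ]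
  rw [← ENNReal.ofReal_one, ← ENNReal.ofReal_sub _ (by nlinarith)]

lemma paretoAux_pi (m : ℕ) (i : Fin (m+1)) :
    Measure.pi (fun _ : Fin (m+1) => volume.restrict (Icc (0:ℝ) 1 ×ˢ Icc (0:ℝ) 1))
      {x : Fin (m+1) → ℝ×ℝ |
        ∀ j, j ≠ i → ¬((x i).1 ≤ (x j).1 ∧ (x i).2 ≤ (x j).2 ∧ x j ≠ x i)}
    = ENNReal.ofReal ((∑ k ∈ Finset.range (m+1), (1:ℝ)/(k+1))/(m+1)) := by
  set ν := volume.restrict (Icc (0:ℝ) 1 ×ˢ Icc (0:ℝ) 1) with hν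
  haveI hprob : IsProbabilityMeasure ν := by
    constructor
    rw [hν, Measure.restrict_apply_univ]
    exact paretoAux_volS
  set e := MeasurableEquiv.piFinSuccAbove (fun _ : Fin (m+1) => ℝ×ℝ) i with he
  set B : Set ((ℝ×ℝ) × (Fin m → ℝ×ℝ)) :=
    {z | ∀ j, ¬(z.1.1 ≤ (z.2 j).1 ∧ z.1.2 ≤ (z.2 j).2 ∧ z.2 j ≠ z.1)} with hB
  have hBm : MeasurableSet B := by
    have : B = ⋂ j : Fin m,
        ({z : (ℝ×ℝ) × (Fin m → ℝ×ℝ) | z.1.1 ≤ (z.2 j).1} ∩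
          ({z | z.1.2 ≤ (z.2 j).2} ∩ {z | z.2 j = z.1}ᶜ))ᶜ := by
      ext z
      simp only [hB, Set.mem_setOf_eq, Set.mem_iInter, Set.mem_compl_iff, Set.mem_inter_iff,
        Set.mem_setOf_eq, not_and, ne_eq]
    rw [this]
    refine MeasurableSet.iInter fun j => MeasurableSet.compl ?_
    refine (measurableSet_le measurable_fst.fst
      (((measurable_pi_apply j).comp measurable_snd).fst)).inter
      ((measurableSet_le measurable_fst.snd
        (((measurable_pi_apply j).comp measurable_snd).snd)).inter
        (MeasurableSet.compl ?_))
    exact measurableSet_eq_fun measurable_snd.eval measurable_fst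
  have hpre : {x : Fin (m+1) → ℝ×ℝ |
        ∀ j, j ≠ i → ¬((x i).1 ≤ (x j).1 ∧ (x i).2 ≤ (x j).2 ∧ x j ≠ x i)}
      = e ⁻¹' B := by
    have hex : ∀ x : Fin (m+1) → ℝ×ℝ, e x = (x i, fun j => x (i.succAbove j)) := fun _ => rfl
    ext x
    simp only [Set.mem_preimage, Set.mem_setOf_eq, hex, hB]
    constructor
    · intro h j
      exact h _ (Fin.succAbove_ne i j)
    · intro h j hj
      obtain ⟨k, rfl⟩ := Fin.exists_succAbove_eq hj
      exact h k
  rw [hpre,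
    (measurePreserving_piFinSuccAbove (fun _ : Fin (m+1) => ν) i).measure_preimage
      hBm.nullMeasurableSet,
    Measure.prod_apply hBm]
  have hslice : ∀ p : ℝ×ℝ, (Prod.mk p ⁻¹' B)
      = Set.pi Set.univ (fun _ : Fin m => {q : ℝ×ℝ | ¬(p.1 ≤ q.1 ∧ p.2 ≤ q.2 ∧ q ≠ p)}) := by
    intro p; ext y; simp [hB, Set.mem_pi]
  simp_rw [hslice, Measure.pi_pi, Finset.prod_const, Finset.card_univ, Fintype.card_fin]
  have hae : ∀ᵐ p ∂ν, ν {q : ℝ×ℝ | ¬(p.1 ≤ q.1 ∧ p.2 ≤ q.2 ∧ q ≠ p)} ^ m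
      = ENNReal.ofReal ((1 - (1-p.1)*(1-p.2))^m) := by
    filter_upwards [ae_restrict_mem (measurableSet_Icc.prod measurableSet_Icc)] with p hp
    obtain ⟨⟨h01, h11⟩, h02, h12⟩ := hp
    rw [paretoAux_nuC p ⟨⟨h01, h11⟩, h02, h12⟩, ← ENNReal.ofReal_pow (by nlinarith)]
  rw [lintegral_congr_ae hae]
  have hint : Integrable (fun p : ℝ×ℝ => (1 - (1-p.1)*(1-p.2))^m) ν :=
    ((continuous_const.sub ((continuous_const.sub continuous_fst).mul
      (continuous_const.sub continuous_snd))).pow m).continuousOn.integrableOn_compact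
      (isCompact_Icc.prod isCompact_Icc)
  have hnn : 0 ≤ᵐ[ν] fun p : ℝ×ℝ => (1 - (1-p.1)*(1-p.2))^m := by
    filter_upwards [ae_restrict_mem (measurableSet_Icc.prod measurableSet_Icc)] with p hp
    obtain ⟨⟨h01, h11⟩, h02, h12⟩ := hp
    have : (0:ℝ) ≤ 1 - (1-p.1)*(1-p.2) := by nlinarith
    positivity
  rw [← ofReal_integral_eq_lintegral_ofReal hint hnn]
  congr 1
  exact paretoAux_sq m


end ParetoHelpers

/-- The number of Pareto-optimal (maximal) points among `x 0, …, x (n-1)` in the plane: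
a point is Pareto-optimal if no other point weakly dominates it coordinatewise while
being different. -/
noncomputable def paretoPtCount {n : ℕ} (x : Fin n → ℝ × ℝ) : ℕ := by
  classical
  exact (Finset.univ.filter fun i : Fin n =>
    ∀ j : Fin n, j ≠ i → ¬((x i).1 ≤ (x j).1 ∧ (x i).2 ≤ (x j).2 ∧ x j ≠ x i)).card

/-- For `n` i.i.d. points uniform on the unit square, the expected number of
Pareto-optimal points equals the harmonic number `H_n = ∑_{k=1}^n 1/k` (which is
`O(log n)`). -/
theorem expected_pareto_points_eq_harmonic {Ω : Type*} [MeasureSpace Ω]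
    [IsProbabilityMeasure (ℙ : Measure Ω)] (n : ℕ)
    (X : Fin n → Ω → ℝ × ℝ)
    (hindep : ProbabilityTheory.iIndepFun X ℙ)
    (hunif : ∀ i, pdf.IsUniform (X i) (Set.Icc 0 1 ×ˢ Set.Icc 0 1) ℙ) :
    ∫⁻ ω, (paretoPtCount (fun i => X i ω) : ℝ≥0∞) ∂ℙ
      = ENNReal.ofReal (∑ k ∈ Finset.range n, (1 : ℝ) / (k + 1)) := by
  classical
  rcases n with _ | m
  · have h0 : ∀ x : Fin 0 → ℝ × ℝ, paretoPtCount x = 0 := fun x => rfl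
    simp [h0]
  have hS0 : (volume : Measure (ℝ×ℝ)) (Set.Icc 0 1 ×ˢ Set.Icc 0 1) ≠ 0 := by
    rw [paretoAux_volS]; exact one_ne_zero
  have hST : (volume : Measure (ℝ×ℝ)) (Set.Icc 0 1 ×ˢ Set.Icc 0 1) ≠ ⊤ := by
    rw [paretoAux_volS]; exact ENNReal.one_ne_top
  have hmap : ∀ i, Measure.map (X i) ℙ
      = volume.restrict (Set.Icc (0:ℝ) 1 ×ˢ Set.Icc (0:ℝ) 1) := by
    intro i
    have h := hunif i
    rw [pdf.IsUniform] at h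
    rw [h, ProbabilityTheory.cond, paretoAux_volS, inv_one, one_smul]
  have hXae : ∀ i, AEMeasurable (X i) ℙ := fun i => (hunif i).aemeasurable hS0 hST
  set M : Fin (m+1) → Set (Fin (m+1) → ℝ×ℝ) := fun i =>
    {x | ∀ j, j ≠ i → ¬((x i).1 ≤ (x j).1 ∧ (x i).2 ≤ (x j).2 ∧ x j ≠ x i)} with hM
  have hMm : ∀ i, MeasurableSet (M i) := by
    intro i
    have hrw : M i = ⋂ j, ⋂ (_ : j ≠ i),
        ({x : Fin (m+1) → ℝ×ℝ | (x i).1 ≤ (x j).1} ∩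
          ({x | (x i).2 ≤ (x j).2} ∩ {x | x j = x i}ᶜ))ᶜ := by
      ext x
      simp only [hM, Set.mem_setOf_eq, Set.mem_iInter, Set.mem_compl_iff, Set.mem_inter_iff,
        ne_eq, not_and]
    rw [hrw]
    exact MeasurableSet.iInter fun j => MeasurableSet.iInter fun _ =>
      (((measurableSet_le (measurable_pi_apply i).fst (measurable_pi_apply j).fst)).inter
        ((measurableSet_le (measurable_pi_apply i).snd (measurable_pi_apply j).snd).inter
          (measurableSet_eq_fun (measurable_pi_apply j) (measurable_pi_apply i)).compl)).compl
  have hcount : ∀ x : Fin (m+1) → ℝ×ℝ, ((paretoPtCount x : ℝ≥0∞))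
      = ∑ i : Fin (m+1), (M i).indicator (1 : (Fin (m+1) → ℝ×ℝ) → ℝ≥0∞) x := by
    intro x
    have h1 : paretoPtCount x = ∑ i : Fin (m+1), if x ∈ M i then 1 else 0 := by
      rw [show paretoPtCount x = (Finset.univ.filter fun i : Fin (m+1) =>
        ∀ j, j ≠ i → ¬((x i).1 ≤ (x j).1 ∧ (x i).2 ≤ (x j).2 ∧ x j ≠ x i)).card from rfl,
        Finset.card_filter]
      refine Finset.sum_congr rfl fun i _ => ?_
      by_cases h : x ∈ M i
      · rw [if_pos h, if_pos]
        exact h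
      · rw [if_neg h, if_neg]
        exact h
    rw [h1]
    push_cast
    refine Finset.sum_congr rfl fun i _ => ?_
    by_cases h : x ∈ M i <;> simp [Set.indicator_apply, h]
  set Y : Ω → (Fin (m+1) → ℝ×ℝ) := fun ω i => X i ω with hY
  have hYae : AEMeasurable Y ℙ := by
    refine ⟨fun ω i => (hXae i).mk (X i) ω,
      measurable_pi_lambda _ (fun i => (hXae i).measurable_mk), ?_⟩
    have hae : ∀ᵐ ω ∂ℙ, ∀ i, X i ω = (hXae i).mk (X i) ω :=
      ae_all_iff.mpr fun i => (hXae i).ae_eq_mk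
    filter_upwards [hae] with ω h
    exact funext fun i => h i
  have hYmap : Measure.map Y ℙ = Measure.pi
      (fun _ : Fin (m+1) => volume.restrict (Set.Icc (0:ℝ) 1 ×ˢ Set.Icc (0:ℝ) 1)) := by
    refine (Measure.pi_eq fun s hs => ?_).symm
    rw [Measure.map_apply_of_aemeasurable hYae (MeasurableSet.univ_pi hs)]
    have hpre : Y ⁻¹' Set.pi Set.univ s = ⋂ i ∈ Finset.univ, X i ⁻¹' s i := by
      ext ω; simp [hY, Set.mem_pi]
    rw [hpre, hindep.measure_inter_preimage_eq_mul Finset.univ (fun i _ => hs i)]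
    refine Finset.prod_congr rfl fun i _ => ?_
    rw [← Measure.map_apply_of_aemeasurable (hXae i) (hs i), hmap i]
  have hg : Measurable fun x : Fin (m+1) → ℝ×ℝ => (paretoPtCount x : ℝ≥0∞) := by
    rw [show (fun x : Fin (m+1) → ℝ×ℝ => (paretoPtCount x : ℝ≥0∞))
      = fun x => ∑ i : Fin (m+1), (M i).indicator (1 : (Fin (m+1) → ℝ×ℝ) → ℝ≥0∞) x from funext hcount]
    exact Finset.measurable_sum _ fun i _ => measurable_const.indicator (hMm i)
  have hstep : ∫⁻ ω, (paretoPtCount (fun i => X i ω) : ℝ≥0∞) ∂ℙ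
      = ∫⁻ x, (paretoPtCount x : ℝ≥0∞) ∂(Measure.map Y ℙ) :=
    (lintegral_map' hg.aemeasurable hYae).symm
  rw [hstep, hYmap]
  have hsum : ∫⁻ x, (paretoPtCount x : ℝ≥0∞)
      ∂(Measure.pi (fun _ : Fin (m+1) => volume.restrict (Set.Icc (0:ℝ) 1 ×ˢ Set.Icc (0:ℝ) 1)))
      = ∑ i : Fin (m+1), ENNReal.ofReal
          ((∑ k ∈ Finset.range (m+1), (1:ℝ)/(k+1))/(m+1)) := by
    simp_rw [hcount]
    rw [lintegral_finset_sum (f := fun i => (M i).indicator (1 : (Fin (m+1) → ℝ×ℝ) → ℝ≥0∞)) Finset.univ (fun i _ => measurable_const.indicator (hMm i))]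
    refine Finset.sum_congr rfl fun i _ => ?_
    rw [lintegral_indicator_one (hMm i)]
    exact paretoAux_pi m i
  rw [hsum, Finset.sum_const, Finset.card_univ, Fintype.card_fin, nsmul_eq_mul,
    ← ENNReal.ofReal_natCast (m+1), ← ENNReal.ofReal_mul (by positivity)]
  congr 1
  push_cast
  rw [mul_div_cancel₀]
  positivity
end
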